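/- If an IncNRC+ expression h is input-independent (the relation symbol R does not occur in h), then its semantic delta is the empty bag: for all values of R and ΔR, the denotation of δ(h) equals the zero bag, equivalently ⟦h⟧(R ⊎ ΔR) = ⟦h⟧(R). -/

import Mathlib

/-- Nested relational types. -/
inductive Ty : Type where
  | base : Ty
  | prod (t₁ t₂ : Ty) : Ty
  | bag (t : Ty) : Ty

/-- Denotation of types; `bag t` denotes bags, i.e. finitely supported
functions into `ℤ`. -/
def Ty.denote : Ty → Type
  | .base => ℕ
  | .prod t₁ t₂ => t₁.denote × t₂.denote
  | .bag t => t.denote →₀ ℤ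

/-- Bag Cartesian product: `(X × Y)(a,b) = X(a) · Y(b)`. -/
noncomputable def bagProd {A B : Type*} (X : A →₀ ℤ) (Y : B →₀ ℤ) : A × B →₀ ℤ :=
  Finsupp.onFinset (X.support ×ˢ Y.support) (fun p => X p.1 * Y p.2)
    (fun p hp => Finset.mem_product.mpr
      ⟨Finsupp.mem_support_iff.mpr (left_ne_zero_of_mul hp),
       Finsupp.mem_support_iff.mpr (right_ne_zero_of_mul hp)⟩)

/-- The for-comprehension (bind): `bind(X, f)(b) = Σ_a X(a) · f(a)(b)`. -/
noncomputable def bagBind {A B : Type*} (X : A →₀ ℤ) (f : A → (B →₀ ℤ)) : B →₀ ℤ :=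
  X.sum fun a m => m • f a

/-- Flatten: `flatten(X)(b) = Σ_v X(v) · v(b)`. -/
noncomputable def bagFlatten {B : Type*} (X : (B →₀ ℤ) →₀ ℤ) : B →₀ ℤ :=
  X.sum fun v m => m • v

/-- IncNRC⁺ expressions of bag type `Bag t`, over a single input relation of
bag type `Bag tA` (`rel`) and its update (`deltaRel`).  Input-independent
atoms are constant bags; the for-comprehension binds a variable of the
element type of its source. -/
inductive Expr (tA : Ty) : Ty → Type where
  | rel : Expr tA tA
  | deltaRel : Expr tA tA
  | empty : ∀ {t}, Expr tA t
  | atom : ∀ {t}, (Ty.denote t →₀ ℤ) → Expr tA t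
  | union : ∀ {t}, Expr tA t → Expr tA t → Expr tA t
  | prod : ∀ {t₁ t₂}, Expr tA t₁ → Expr tA t₂ → Expr tA (.prod t₁ t₂)
  | forC : ∀ {t₁ t₂}, Expr tA t₁ → (Ty.denote t₁ → Expr tA t₂) → Expr tA t₂
  | flatten : ∀ {t}, Expr tA (.bag t) → Expr tA t
  | neg : ∀ {t}, Expr tA t → Expr tA t

/-- Denotational semantics: an expression denotes a bag, given the input
relation `R` and the update `ΔR`. -/
noncomputable def Expr.denote {tA : Ty} (R ΔR : Ty.denote tA →₀ ℤ) :
    ∀ {t : Ty}, Expr tA t → (Ty.denote t →₀ ℤ)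
  | _, .rel => R
  | _, .deltaRel => ΔR
  | _, .empty => 0
  | _, .atom v => v
  | _, .union e₁ e₂ => Expr.denote R ΔR e₁ + Expr.denote R ΔR e₂
  | _, .prod e₁ e₂ => bagProd (Expr.denote R ΔR e₁) (Expr.denote R ΔR e₂)
  | _, .forC e₁ f => bagBind (Expr.denote R ΔR e₁) fun x => Expr.denote R ΔR (f x)
  | _, .flatten e => bagFlatten (Expr.denote R ΔR e)
  | _, .neg e => -Expr.denote R ΔR e
termination_by structural _ e => e

/-- The syntactic delta transformation. -/
def Expr.delta {tA : Ty} : ∀ {t : Ty}, Expr tA t → Expr tA t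
  | _, .rel => .deltaRel
  | _, .deltaRel => .empty
  | _, .empty => .empty
  | _, .atom _ => .empty
  | _, .union e₁ e₂ => .union (Expr.delta e₁) (Expr.delta e₂)
  | _, .prod e₁ e₂ =>
      .union (.union (.prod (Expr.delta e₁) e₂) (.prod e₁ (Expr.delta e₂)))
        (.prod (Expr.delta e₁) (Expr.delta e₂))
  | _, .forC e₁ f =>
      .union (.union (.forC (Expr.delta e₁) f) (.forC e₁ fun x => Expr.delta (f x)))
        (.forC (Expr.delta e₁) fun x => Expr.delta (f x))
  | _, .flatten e => .flatten (Expr.delta e)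
  | _, .neg e => .neg (Expr.delta e)

/-- An expression is input-independent iff the relation symbol `R` (`rel`)
does not occur in it. -/
def Expr.InputIndep {tA : Ty} : ∀ {t : Ty}, Expr tA t → Prop
  | _, .rel => False
  | _, .deltaRel => True
  | _, .empty => True
  | _, .atom _ => True
  | _, .union e₁ e₂ => Expr.InputIndep e₁ ∧ Expr.InputIndep e₂
  | _, .prod e₁ e₂ => Expr.InputIndep e₁ ∧ Expr.InputIndep e₂
  | _, .forC e₁ f => Expr.InputIndep e₁ ∧ ∀ x, Expr.InputIndep (f x)
  | _, .flatten e => Expr.InputIndep e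
  | _, .neg e => Expr.InputIndep e

lemma bagProd_zero_left {A B : Type*} (Y : B →₀ ℤ) : bagProd (0 : A →₀ ℤ) Y = 0 := by
  ext p; simp [bagProd]

lemma bagProd_zero_right {A B : Type*} (X : A →₀ ℤ) : bagProd X (0 : B →₀ ℤ) = 0 := by
  ext p; simp [bagProd]

lemma bagBind_zero_left {A B : Type*} (f : A → (B →₀ ℤ)) : bagBind 0 f = 0 := by
  simp [bagBind]

lemma bagBind_zero_right {A B : Type*} (X : A →₀ ℤ) :
    bagBind X (fun _ => (0 : B →₀ ℤ)) = 0 := by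
  simp [bagBind]

lemma bagFlatten_zero {B : Type*} : bagFlatten (0 : (B →₀ ℤ) →₀ ℤ) = 0 := by
  simp [bagFlatten]

/-- if `h` is input-independent then its semantic delta is the
empty bag; equivalently `⟦h⟧(R ⊎ ΔR) = ⟦h⟧(R)`. -/
theorem delta_inputIndep {tA t : Ty} (h : Expr tA t) (hI : Expr.InputIndep h) :
    ∀ R ΔR D : Ty.denote tA →₀ ℤ,
      Expr.denote R ΔR (Expr.delta h) = 0 ∧
      Expr.denote (R + ΔR) D h = Expr.denote R D h := by
  induction h with
  | rel => exact absurd hI id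
  | deltaRel => exact fun R ΔR D => ⟨rfl, rfl⟩
  | empty => exact fun R ΔR D => ⟨rfl, rfl⟩
  | atom v => exact fun R ΔR D => ⟨rfl, rfl⟩
  | union e₁ e₂ ih₁ ih₂ =>
    intro R ΔR D
    obtain ⟨h1, h2⟩ := hI
    obtain ⟨a1, b1⟩ := ih₁ h1 R ΔR D
    obtain ⟨a2, b2⟩ := ih₂ h2 R ΔR D
    exact ⟨by simp [Expr.delta, Expr.denote, a1, a2], by simp [Expr.denote, b1, b2]⟩
  | prod e₁ e₂ ih₁ ih₂ =>
    intro R ΔR D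
    obtain ⟨h1, h2⟩ := hI
    obtain ⟨a1, b1⟩ := ih₁ h1 R ΔR D
    obtain ⟨a2, b2⟩ := ih₂ h2 R ΔR D
    exact ⟨by simp [Expr.delta, Expr.denote, a1, a2, bagProd_zero_left, bagProd_zero_right]; exact (add_zero _).trans (add_zero _),
           by simp [Expr.denote, b1, b2]; rfl⟩
  | forC e₁ f ih₁ ihf =>
    intro R ΔR D
    obtain ⟨h1, h2⟩ := hI
    obtain ⟨a1, b1⟩ := ih₁ h1 R ΔR D
    constructor
    · simp only [Expr.delta, Expr.denote, a1]
      have hz : (bagBind (Expr.denote R ΔR e₁)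
          fun x => Expr.denote R ΔR (Expr.delta (f x))) = 0 := by
        have : (fun x => Expr.denote R ΔR (Expr.delta (f x))) =
            fun _ => (0 : Ty.denote _ →₀ ℤ) := by
          funext x; exact (ihf x (h2 x) R ΔR D).1
        rw [this, bagBind_zero_right]
      simp [bagBind_zero_left, hz]
    · simp only [Expr.denote, b1]
      congr 1
      funext x
      exact (ihf x (h2 x) R ΔR D).2
  | flatten e ih =>
    intro R ΔR D
    obtain ⟨a, b⟩ := ih hI R ΔR D
    exact ⟨by simp [Expr.delta, Expr.denote, a, bagFlatten_zero]; exact bagFlatten_zero,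
           by simp [Expr.denote, b]⟩
  | neg e ih =>
    intro R ΔR D
    obtain ⟨a, b⟩ := ih hI R ΔR D
    exact ⟨by simp [Expr.delta, Expr.denote, a], by simp [Expr.denote, b]⟩
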